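/- Let f : ℝⁿ → ℝ be convex and differentiable with inf f > −∞, T > 0, and let X : [0,T] → ℝⁿ be a C² solution of 0 = Ẍ − (3/(t−T))Ẋ + 2∇f(X) on [0,T) with X(0) = X₀, Ẋ(0) = 0, extended continuously so that Ẋ(T) = 0 and lim_{t→T⁻} Ẋ(t)/(t−T) = ∇f(X(T)). Then ‖∇f(X(T))‖² ≤ 4( f(X₀) − f(X(T)) )/T² ≤ 4( f(X₀) − f⋆ )/T². -/

import Mathlib

open Filter MeasureTheory
open scoped RealInnerProductSpace Topology

set_option maxHeartbeats 1000000 in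
open Set in
theorem ogmg_ode_gradient_rate
    {E : Type*} [NormedAddCommGroup E] [InnerProductSpace ℝ E] [CompleteSpace E]
    (f : E → ℝ) (g : E → E)
    (hgrad : ∀ x, HasGradientAt f (g x) x)
    (hconv : ∀ x y, 0 ≤ f x - f y - ⟪g y, x - y⟫)
    (fstar : ℝ) (hfstar : ∀ x, fstar ≤ f x)
    (T : ℝ) (hT : 0 < T)
    (X X' X'' : ℝ → E)
    (hX' : ∀ t ∈ Set.Ico (0:ℝ) T, HasDerivAt X (X' t) t)
    (hX'' : ∀ t ∈ Set.Ico (0:ℝ) T, HasDerivAt X' (X'' t) t)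
    (hXc : ContinuousOn X (Set.Icc 0 T))
    (hODE : ∀ t ∈ Set.Ico (0:ℝ) T,
      X'' t - (3 / (t - T)) • X' t + (2:ℝ) • g (X t) = 0)
    (X₀ : E) (hX0 : X 0 = X₀) (hXd0 : X' 0 = 0)
    (hXdT : Tendsto X' (𝓝[<] T) (𝓝 0))
    (hXdlim : Tendsto (fun t => (t - T)⁻¹ • X' t) (𝓝[<] T) (𝓝 (g (X T)))) :
    ‖g (X T)‖ ^ 2 ≤ 4 * (f X₀ - f (X T)) / T ^ 2 ∧
      4 * (f X₀ - f (X T)) / T ^ 2 ≤ 4 * (f X₀ - fstar) / T ^ 2 := by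
  have hT2 : (0:ℝ) < T ^ 2 := by positivity
  constructor
  case right =>
    gcongr
    exact hfstar (X T)
  -- Derivative of the Lyapunov function W on [0, T)
  have hWderiv : ∀ t ∈ Ico (0:ℝ) T,
      HasDerivAt (fun r => 4⁻¹ * ((r - T) ^ 2)⁻¹ * ⟪X' r, X' r⟫
          + ((r - T) ^ 2)⁻¹ * (f (X r) - f (X T))
          - ((r - T) ^ 3)⁻¹ * ⟪X' r, X r - X T⟫)
        ((-2) * ((t - T) ^ 3)⁻¹ * (f (X t) - f (X T) - ⟪g (X t), X t - X T⟫)) t := by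
    intro t ht
    have hst : t - T < 0 := sub_neg.2 ht.2
    have hs0 : t - T ≠ 0 := ne_of_lt hst
    have hXt := hX' t ht
    have hXt' := hX'' t ht
    have hXdd : X'' t = (3 / (t - T)) • X' t - (2:ℝ) • g (X t) := by
      have h := hODE t ht
      rwa [sub_add, sub_eq_zero] at h
    have hA : HasDerivAt (fun r : ℝ => ((r - T) ^ 2)⁻¹)
        (-(↑2 * (t - T) ^ 1 * 1) / ((t - T) ^ 2) ^ 2) t :=
      (((hasDerivAt_id t).sub_const T).pow 2).inv (pow_ne_zero 2 hs0)
    have hB : HasDerivAt (fun r : ℝ => ((r - T) ^ 3)⁻¹)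
        (-(↑3 * (t - T) ^ 2 * 1) / ((t - T) ^ 3) ^ 2) t :=
      (((hasDerivAt_id t).sub_const T).pow 3).inv (pow_ne_zero 3 hs0)
    have hP : HasDerivAt (fun r => ⟪X' r, X' r⟫)
        (⟪X' t, X'' t⟫ + ⟪X'' t, X' t⟫) t := hXt'.inner ℝ hXt'
    have hQ : HasDerivAt (fun r => f (X r)) ⟪g (X t), X' t⟫ t := by
      have h := (hgrad (X t)).hasFDerivAt.comp_hasDerivAt t hXt
      simpa [Function.comp_def, InnerProductSpace.toDual_apply_apply] using h
    have hR : HasDerivAt (fun r => ⟪X' r, X r - X T⟫)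
        (⟪X' t, X' t⟫ + ⟪X'' t, X t - X T⟫) t :=
      hXt'.inner ℝ (hXt.sub_const (X T))
    have hsum := (((hA.const_mul (4⁻¹:ℝ)).mul hP).add
        (hA.mul (hQ.sub_const (f (X T))))).sub (hB.mul hR)
    refine HasDerivAt.congr_deriv hsum (Eq.symm ?_)
    rw [hXdd]
    simp only [inner_sub_right, inner_sub_left, real_inner_smul_left, real_inner_smul_right]
    rw [real_inner_comm (X' t) (g (X t))]
    field_simp
    ring
  -- Monotonicity: W t ≤ W 0 on [0, T)
  have hmono : ∀ t ∈ Ico (0:ℝ) T,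
      4⁻¹ * ((t - T) ^ 2)⁻¹ * ⟪X' t, X' t⟫ + ((t - T) ^ 2)⁻¹ * (f (X t) - f (X T))
        - ((t - T) ^ 3)⁻¹ * ⟪X' t, X t - X T⟫
      ≤ 4⁻¹ * ((0 - T) ^ 2)⁻¹ * ⟪X' 0, X' 0⟫ + ((0 - T) ^ 2)⁻¹ * (f (X 0) - f (X T))
        - ((0 - T) ^ 3)⁻¹ * ⟪X' 0, X 0 - X T⟫ := by
    intro t ht
    have hanti : AntitoneOn (fun r => 4⁻¹ * ((r - T) ^ 2)⁻¹ * ⟪X' r, X' r⟫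
        + ((r - T) ^ 2)⁻¹ * (f (X r) - f (X T))
        - ((r - T) ^ 3)⁻¹ * ⟪X' r, X r - X T⟫) (Icc 0 t) := by
      apply antitoneOn_of_deriv_nonpos (convex_Icc 0 t)
      · intro x hx
        have hx' : x ∈ Ico (0:ℝ) T := ⟨hx.1, lt_of_le_of_lt hx.2 ht.2⟩
        exact (hWderiv x hx').differentiableAt.continuousAt.continuousWithinAt
      · rw [interior_Icc]
        intro x hx
        have hx' : x ∈ Ico (0:ℝ) T := ⟨hx.1.le, lt_trans hx.2 ht.2⟩
        exact (hWderiv x hx').differentiableAt.differentiableWithinAt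
      · rw [interior_Icc]
        intro x hx
        have hx' : x ∈ Ico (0:ℝ) T := ⟨hx.1.le, lt_trans hx.2 ht.2⟩
        rw [(hWderiv x hx').deriv]
        have hst : x - T < 0 := sub_neg.2 hx'.2
        have h3 : (x - T) ^ 3 < 0 := Odd.pow_neg (by decide) hst
        have hpos : (0:ℝ) < (-2) * ((x - T) ^ 3)⁻¹ := by
          have h4 : ((x - T) ^ 3)⁻¹ < 0 := inv_lt_zero.2 h3
          nlinarith
        have hcv := hconv (X T) (X x)
        have hrw : ⟪g (X x), X T - X x⟫ = -⟪g (X x), X x - X T⟫ := by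
          rw [← inner_neg_right, neg_sub]
        have hle : f (X x) - f (X T) - ⟪g (X x), X x - X T⟫ ≤ 0 := by
          rw [hrw] at hcv; linarith
        nlinarith
    have := hanti (left_mem_Icc.2 ht.1) (right_mem_Icc.2 ht.1) ht.1
    simpa using this
  -- convexity lower bound F ≤ W on [0, T)
  have hFleW : ∀ t ∈ Ico (0:ℝ) T,
      4⁻¹ * ⟪(t - T)⁻¹ • X' t, (t - T)⁻¹ • X' t⟫
          + ((t - T) ^ 2)⁻¹ * ⟪g (X T) - (t - T)⁻¹ • X' t, X t - X T⟫ ≤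
        4⁻¹ * ((t - T) ^ 2)⁻¹ * ⟪X' t, X' t⟫ + ((t - T) ^ 2)⁻¹ * (f (X t) - f (X T))
          - ((t - T) ^ 3)⁻¹ * ⟪X' t, X t - X T⟫ := by
    intro t ht
    have hst : t - T < 0 := sub_neg.2 ht.2
    have hs0 : t - T ≠ 0 := ne_of_lt hst
    have hs2 : (0:ℝ) < (t - T) ^ 2 := by nlinarith
    have hcv := hconv (X t) (X T)
    rw [← sub_nonneg]
    have h3 : 0 ≤ ((t - T) ^ 2)⁻¹ * (f (X t) - f (X T) - ⟪g (X T), X t - X T⟫) :=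
      mul_nonneg (inv_pos.2 hs2).le hcv
    convert h3 using 1
    simp only [real_inner_smul_left, real_inner_smul_right, inner_sub_left]
    field_simp
    ring
  -- continuity of X up to T from the left
  have hXtend : Tendsto X (𝓝[<] T) (𝓝 (X T)) := by
    have h : Tendsto X (𝓝[Icc (0:ℝ) T] T) (𝓝 (X T)) := hXc T (right_mem_Icc.2 hT.le)
    rw [← nhdsWithin_Ioo_eq_nhdsLT hT]
    exact h.mono_left (nhdsWithin_mono T Ioo_subset_Icc_self)
  -- uniform bound on the dilated velocity near T
  obtain ⟨l, hlT, hl⟩ : ∃ l < T, ∀ r ∈ Ioo l T, ‖(r - T)⁻¹ • X' r‖ ≤ ‖g (X T)‖ + 1 := by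
    have h2 : ∀ᶠ r in 𝓝[<] T, ‖(r - T)⁻¹ • X' r‖ ≤ ‖g (X T)‖ + 1 :=
      (hXdlim.norm.eventually_lt_const (lt_add_one _)).mono fun x hx => hx.le
    rw [eventually_iff, mem_nhdsLT_iff_exists_Ioo_subset] at h2
    obtain ⟨l, hl1, hl2⟩ := h2
    exact ⟨l, hl1, fun r hr => hl2 hr⟩
  have ht₀T : max l 0 < T := max_lt hlT hT
  -- second-order bound ‖X t - X T‖ ≤ M (t - T)^2 near T
  have hXbound : ∀ t ∈ Ioo (max l 0) T, ‖X t - X T‖ ≤ (‖g (X T)‖ + 1) * (t - T) ^ 2 := by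
    intro t htt
    have ht0 : (0:ℝ) ≤ t := le_of_lt (lt_of_le_of_lt (le_max_right l 0) htt.1)
    have hltt : l < t := lt_of_le_of_lt (le_max_left l 0) htt.1
    have hstep : ∀ r ∈ Ico t T,
        ‖X r - X t‖ ≤ (‖g (X T)‖ + 1) * (T - t) * (T - t) := by
      intro r hr
      have htr : t ≤ r := hr.1
      have hsub : Icc t r ⊆ Ico 0 T := fun x hx =>
        ⟨le_trans ht0 hx.1, lt_of_le_of_lt hx.2 hr.2⟩
      have hcont : ContinuousOn X' (uIcc t r) := by
        rw [uIcc_of_le htr]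
        exact fun x hx => ((hX'' x (hsub hx)).differentiableAt.continuousAt).continuousWithinAt
      have hftc : ∫ x in t..r, X' x = X r - X t := by
        apply intervalIntegral.integral_eq_sub_of_hasDerivAt
        · intro x hx
          rw [uIcc_of_le htr] at hx
          exact hX' x (hsub hx)
        · exact hcont.intervalIntegrable
      rw [← hftc]
      have hnb : ∀ x ∈ uIoc t r, ‖X' x‖ ≤ (‖g (X T)‖ + 1) * (T - t) := by
        intro x hx
        rw [uIoc_of_le htr] at hx
        have hxT : x < T := lt_of_le_of_lt hx.2 hr.2
        have hux := hl x ⟨lt_trans hltt hx.1, hxT⟩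
        have hXx : X' x = (x - T) • ((x - T)⁻¹ • X' x) := by
          rw [smul_smul, mul_inv_cancel₀ (sub_ne_zero.2 hxT.ne), one_smul]
        rw [hXx, norm_smul]
        have h1 : ‖x - T‖ = T - x := by
          rw [Real.norm_eq_abs, abs_of_neg (sub_neg.2 hxT)]; ring
        rw [h1]
        nlinarith [norm_nonneg ((x - T)⁻¹ • X' x), hx.1]
      calc ‖∫ x in t..r, X' x‖ ≤ (‖g (X T)‖ + 1) * (T - t) * |r - t| :=
            intervalIntegral.norm_integral_le_of_norm_le_const hnb
        _ ≤ (‖g (X T)‖ + 1) * (T - t) * (T - t) := by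
            have h5 : |r - t| = r - t := abs_of_nonneg (sub_nonneg.2 htr)
            rw [h5]
            have hMt : (0:ℝ) ≤ (‖g (X T)‖ + 1) * (T - t) := by
              have : (0:ℝ) < T - t := sub_pos.2 htt.2
              positivity
            nlinarith [hr.2]
    have htendX : Tendsto (fun r => ‖X r - X t‖) (𝓝[<] T) (𝓝 ‖X T - X t‖) :=
      (hXtend.sub tendsto_const_nhds).norm
    have hev : ∀ᶠ r in 𝓝[<] T,
        ‖X r - X t‖ ≤ (‖g (X T)‖ + 1) * (T - t) * (T - t) := by
      filter_upwards [Ioo_mem_nhdsLT htt.2] with r hr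
      exact hstep r ⟨hr.1.le, hr.2⟩
    have hfin := le_of_tendsto htendX hev
    calc ‖X t - X T‖ = ‖X T - X t‖ := norm_sub_rev _ _
      _ ≤ (‖g (X T)‖ + 1) * (T - t) * (T - t) := hfin
      _ = (‖g (X T)‖ + 1) * (t - T) ^ 2 := by ring
  -- the cross term tends to 0
  have hzero : Tendsto (fun t => ((t - T) ^ 2)⁻¹ * ⟪g (X T) - (t - T)⁻¹ • X' t, X t - X T⟫)
      (𝓝[<] T) (𝓝 0) := by
    have hgb : Tendsto (fun t => ‖g (X T) - (t - T)⁻¹ • X' t‖ * (‖g (X T)‖ + 1))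
        (𝓝[<] T) (𝓝 0) := by
      have h1 : Tendsto (fun t => g (X T) - (t - T)⁻¹ • X' t) (𝓝[<] T)
          (𝓝 (g (X T) - g (X T))) := tendsto_const_nhds.sub hXdlim
      rw [sub_self] at h1
      simpa using h1.norm.mul_const (‖g (X T)‖ + 1)
    apply squeeze_zero_norm' ?_ hgb
    filter_upwards [Ioo_mem_nhdsLT ht₀T] with t htt
    have hb := hXbound t htt
    have hs : t - T < 0 := sub_neg.2 htt.2
    have hs2 : (0:ℝ) < (t - T) ^ 2 := by nlinarith
    have hsne : t - T ≠ 0 := ne_of_lt hs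
    rw [Real.norm_eq_abs, abs_mul, abs_of_pos (inv_pos.2 hs2)]
    have h1 : |⟪g (X T) - (t - T)⁻¹ • X' t, X t - X T⟫|
        ≤ ‖g (X T) - (t - T)⁻¹ • X' t‖ * ‖X t - X T‖ := abs_real_inner_le_norm _ _
    have h3 : ((t - T) ^ 2)⁻¹ * |⟪g (X T) - (t - T)⁻¹ • X' t, X t - X T⟫|
        ≤ ((t - T) ^ 2)⁻¹ * (‖g (X T) - (t - T)⁻¹ • X' t‖
            * ((‖g (X T)‖ + 1) * (t - T) ^ 2)) := by
      apply mul_le_mul_of_nonneg_left _ (inv_pos.2 hs2).le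
      exact le_trans h1 (mul_le_mul_of_nonneg_left hb (norm_nonneg _))
    refine le_trans h3 (le_of_eq ?_)
    field_simp
  -- limit of the lower bound
  have hFlim : Tendsto (fun t => 4⁻¹ * ⟪(t - T)⁻¹ • X' t, (t - T)⁻¹ • X' t⟫
      + ((t - T) ^ 2)⁻¹ * ⟪g (X T) - (t - T)⁻¹ • X' t, X t - X T⟫) (𝓝[<] T)
      (𝓝 (4⁻¹ * ⟪g (X T), g (X T)⟫)) := by
    have h1 : Tendsto (fun t => 4⁻¹ * ⟪(t - T)⁻¹ • X' t, (t - T)⁻¹ • X' t⟫) (𝓝[<] T)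
        (𝓝 (4⁻¹ * ⟪g (X T), g (X T)⟫)) := (hXdlim.inner hXdlim).const_mul _
    have h2 := h1.add hzero
    rw [add_zero] at h2
    exact h2
  -- put everything together
  have hmem : Ico (0:ℝ) T ∈ 𝓝[<] T :=
    mem_of_superset (Ioo_mem_nhdsLT hT) Ioo_subset_Ico_self
  have hW0 : 4⁻¹ * ⟪g (X T), g (X T)⟫ ≤
      4⁻¹ * ((0 - T) ^ 2)⁻¹ * ⟪X' 0, X' 0⟫ + ((0 - T) ^ 2)⁻¹ * (f (X 0) - f (X T))
        - ((0 - T) ^ 3)⁻¹ * ⟪X' 0, X 0 - X T⟫ := by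
    refine le_of_tendsto hFlim ?_
    filter_upwards [hmem] with t ht
    exact le_trans (hFleW t ht) (hmono t ht)
  rw [hXd0, hX0] at hW0
  simp only [inner_zero_left, inner_zero_right, mul_zero, sub_zero, add_zero, zero_add] at hW0
  rw [real_inner_self_eq_norm_sq] at hW0
  have h0T : ((0:ℝ) - T) ^ 2 = T ^ 2 := by ring
  rw [h0T] at hW0
  rw [div_eq_mul_inv]
  nlinarith [hW0]
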